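/- arXiv:2503.23435 — 5 statements merged into one kernel-verified Lean document; each statement's English description precedes it below -/
import Mathlib

section
/- Let G be a countable group, A a finite alphabet, M ⊆ G a finite subset, S = A^(A^M), and s ∈ S^G. If the non-uniform cellular automaton σ_s : A^G → A^G is invertible, then σ_s is stably invertible. -/
open Function Set Pointwise

section Defs

variable {G A S : Type*} [Group G]

/-- The NUCA `σ_s : A^G → A^G` determined by the configuration of local
defining maps `s ∈ S^G`, `S = A^(A^M)`:
`σ_s(x)(g) = s(g)((g⁻¹x)|_M)` where `(g⁻¹x)(h) = x(gh)`. -/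
def nuca {M : Finset G} (s : G → ((M → A) → A)) : (G → A) → (G → A) :=
  fun x g => s g fun m => x (g * (m : G))

/-- The closure, in the prodiscrete topology on `S^G`, of the shift orbit
`{gs : g ∈ G}`, where `(gs)(h) = s(g⁻¹h)`. -/
def orbitClosure (s : G → S) : Set (G → S) :=
  @closure (G → S) (@Pi.topologicalSpace G (fun _ => S) fun _ => ⊥)
    {p | ∃ g : G, p = fun h => s (g⁻¹ * h)}

/-- `τ` is a NUCA with finite memory. -/
def IsNUCAFin (τ : (G → A) → (G → A)) : Prop :=
  ∃ (M : Finset G) (s : G → ((M → A) → A)), τ = nuca s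

/-- `τ` is invertible: it is bijective and its inverse is a NUCA with finite memory. -/
def IsInvertibleNUCA (τ : (G → A) → (G → A)) : Prop :=
  Function.Bijective τ ∧ ∃ ρ : (G → A) → (G → A), IsNUCAFin ρ ∧
    Function.LeftInverse ρ τ ∧ Function.RightInverse ρ τ

/-- `σ_s` is stably injective: `σ_p` is injective for every `p ∈ Σ(s)`. -/
def StablyInjective {M : Finset G} (s : G → ((M → A) → A)) : Prop :=
  ∀ p ∈ orbitClosure s, Function.Injective (nuca p)

/-- `σ_s` is stably invertible. -/
def StablyInvertible {M : Finset G} (s : G → ((M → A) → A)) : Prop :=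
  ∃ (N : Finset G) (t : G → ((N → A) → A)),
    ∀ p ∈ orbitClosure s, ∃ q ∈ orbitClosure t,
      nuca p ∘ nuca q = id ∧ nuca q ∘ nuca p = id

/-- Two configurations are asymptotic if they agree outside a finite set. -/
def Asymptotic (x y : G → S) : Prop :=
  ∃ Ω : Finset G, ∀ g ∉ Ω, x g = y g

/-- `s` is asymptotically constant. -/
def AsymptoticallyConstant (s : G → S) : Prop :=
  ∃ c : S, Asymptotic s fun _ => c

/-- `τ` is pre-injective. -/
def PreInjective (τ : (G → A) → (G → A)) : Prop :=
  ∀ x y : G → A, Asymptotic x y → τ x = τ y → x = y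

/-- `τ` is post-surjective. -/
def PostSurjective (τ : (G → A) → (G → A)) : Prop :=
  ∀ x y : G → A, Asymptotic y (τ x) → ∃ z : G → A, Asymptotic z x ∧ τ z = y

/-- `σ_s` is stably post-surjective: `σ_p` is post-surjective for all `p ∈ Σ(s)`. -/
def StablyPostSurjective {M : Finset G} (s : G → ((M → A) → A)) : Prop :=
  ∀ p ∈ orbitClosure s, PostSurjective (nuca p)

/-- `τ` is a cellular automaton: a NUCA with finite memory and a constant
configuration of local defining maps. -/
def IsCellularAutomaton (τ : (G → A) → (G → A)) : Prop :=
  ∃ (M : Finset G) (μ : (M → A) → A), τ = nuca fun _ : G => μ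

/-- `G` is surjunctive: over every finite alphabet, injective CA are surjective. -/
def Surjunctive (G : Type*) [Group G] : Prop :=
  ∀ (B : Type) [Fintype B] (τ : (G → B) → (G → B)),
    IsCellularAutomaton τ → Function.Injective τ → Function.Surjective τ

/-- `G` is post-injunctive: over every finite alphabet, post-surjective CA are
pre-injective. -/
def PostInjunctive (G : Type*) [Group G] : Prop :=
  ∀ (B : Type) [Fintype B] (τ : (G → B) → (G → B)),
    IsCellularAutomaton τ → PostSurjective τ → PreInjective τ

/-- `s` has uniformly bounded singularity: for every finite symmetric `E ∋ 1`
there is a finite `F ⊇ E` such that `s` is constant on `FE ∖ F`. -/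
def UniformlyBoundedSingularity (s : G → S) : Prop :=
  ∀ E : Finset G, (1 : G) ∈ E → (∀ g ∈ E, g⁻¹ ∈ E) →
    ∃ F : Finset G, E ⊆ F ∧ ∃ c : S,
      ∀ g ∈ ((F : Set G) * (E : Set G)) \ (F : Set G), s g = c

end Defs


section Aux

variable {G : Type*} [Group G]

/-- Finitary characterization of membership in the orbit closure. -/
lemma mem_orbitClosure_iff {S : Type*} (s p : G → S) :
    p ∈ orbitClosure s ↔ ∀ F : Finset G, ∃ g : G, ∀ h ∈ F, p h = s (g⁻¹ * h) := by
  letI : TopologicalSpace S := ⊥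
  haveI : DiscreteTopology S := ⟨rfl⟩
  have he : orbitClosure s
      = closure {p : G → S | ∃ g : G, p = fun h => s (g⁻¹ * h)} := rfl
  rw [he, mem_closure_iff]
  constructor
  · intro H F
    have hO : IsOpen ((F : Set G).pi fun h => ({p h} : Set S)) :=
      isOpen_set_pi F.finite_toSet fun h _ => isOpen_discrete _
    have hpO : p ∈ (F : Set G).pi fun h => ({p h} : Set S) := by
      intro h _; rfl
    obtain ⟨p', hp'O, g, rfl⟩ := H _ hO hpO
    exact ⟨g, fun h hh => (hp'O h hh).symm⟩
  · intro H o ho hpo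
    obtain ⟨I, u, hIu, hsub⟩ := isOpen_pi_iff.mp ho p hpo
    obtain ⟨g, hg⟩ := H I
    refine ⟨fun h => s (g⁻¹ * h), hsub fun a ha => ?_, g, rfl⟩
    rw [← hg a ha]
    exact (hIu a ha).2

/-- Lift an element of `Σ(s)` to the orbit closure of a pair `(s,t)`. -/
lemma exists_pair_lift {S T : Type*} [Finite S] [Finite T]
    (s : G → S) (t : G → T) {p : G → S} (hp : p ∈ orbitClosure s) :
    ∃ r : G → S × T, r ∈ orbitClosure (fun h => (s h, t h)) ∧ ∀ h, (r h).1 = p h := by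
  letI tS : TopologicalSpace S := ⊥
  letI tST : TopologicalSpace (S × T) := ⊥
  haveI : DiscreteTopology S := ⟨rfl⟩
  haveI : DiscreteTopology (S × T) := ⟨rfl⟩
  have heS : orbitClosure s
      = closure {p : G → S | ∃ g : G, p = fun h => s (g⁻¹ * h)} := rfl
  have heST : orbitClosure (fun h => (s h, t h))
      = closure {r : G → S × T | ∃ g : G, r = fun h => (s (g⁻¹ * h), t (g⁻¹ * h))} := rfl
  set u : G → S × T := fun h => (s h, t h) with hu
  set π : (G → S × T) → (G → S) := fun r h => (r h).1 with hπ
  have hcont : Continuous π := continuous_pi fun h =>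
    Continuous.comp continuous_of_discreteTopology (continuous_apply h)
  have hcomp : IsCompact (orbitClosure u) := by
    rw [heST]; exact isClosed_closure.isCompact
  have himg : IsClosed (π '' orbitClosure u) := (hcomp.image hcont).isClosed
  have hsubset : orbitClosure s ⊆ π '' orbitClosure u := by
    rw [heS]
    refine closure_minimal ?_ himg
    rintro _ ⟨g, rfl⟩
    refine ⟨fun h => u (g⁻¹ * h), ?_, rfl⟩
    rw [heST]
    exact subset_closure ⟨g, rfl⟩
  obtain ⟨r, hr, hrp⟩ := hsubset hp
  exact ⟨r, hr, fun h => congrFun hrp h⟩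

/-- Key local computation: passing inverse relations to the orbit closure. -/
lemma nuca_comp_eq_id {A : Type*} {M N : Finset G}
    {s p : G → ((M → A) → A)} {t q : G → ((N → A) → A)}
    (happ : ∀ F : Finset G, ∃ g : G,
      ∀ h ∈ F, p h = s (g⁻¹ * h) ∧ q h = t (g⁻¹ * h))
    (hst : ∀ x, nuca s (nuca t x) = x) :
    nuca p ∘ nuca q = id := by
  haveI := Classical.decEq G
  funext x g
  obtain ⟨g₀, hg⟩ := happ (insert g (M.image fun m => g * m))
  have hpg : p g = s (g₀⁻¹ * g) := (hg g (Finset.mem_insert_self _ _)).1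
  have hqs : ∀ m : M, q (g * (m : G)) = t (g₀⁻¹ * (g * (m : G))) := fun m =>
    (hg _ (Finset.mem_insert_of_mem (Finset.mem_image_of_mem _ m.2))).2
  have key := congrFun (hst fun h => x (g₀ * h)) (g₀⁻¹ * g)
  simp only [nuca] at key
  show nuca p (nuca q x) g = x g
  simp only [nuca, hpg, hqs]
  calc s (g₀⁻¹ * g) (fun m => t (g₀⁻¹ * (g * (m : G)))
          fun n => x (g * (m : G) * (n : G)))
      = s (g₀⁻¹ * g) (fun m => t (g₀⁻¹ * g * (m : G))
          fun n => x (g₀ * (g₀⁻¹ * g * (m : G) * (n : G)))) := by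
        congr 1; funext m; congr 1
        · group
        · funext n; congr 1; group
    _ = x (g₀ * (g₀⁻¹ * g)) := key
    _ = x g := by congr 1; group

end Aux

/-- if the NUCA `σ_s` (finite memory `M`, countable universe `G`,
finite alphabet `A`) is invertible, then it is stably invertible. -/
theorem invertible_implies_stablyInvertible
    {G A : Type*} [Group G] [Countable G] [Fintype A]
    {M : Finset G} (s : G → ((M → A) → A))
    (h : IsInvertibleNUCA (nuca s)) :
    StablyInvertible s := by
  obtain ⟨-, ρ, ⟨N, t, rfl⟩, hl, hr⟩ := h
  refine ⟨N, t, ?_⟩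
  intro p hp
  obtain ⟨r, hru, hfst⟩ := exists_pair_lift s t hp
  set q : G → ((N → A) → A) := fun h => (r h).2 with hq
  have happ : ∀ F : Finset G, ∃ g : G,
      ∀ h ∈ F, p h = s (g⁻¹ * h) ∧ q h = t (g⁻¹ * h) := by
    intro F
    obtain ⟨g, hg⟩ := (mem_orbitClosure_iff _ _).mp hru F
    refine ⟨g, fun h hh => ?_⟩
    have := hg h hh
    constructor
    · rw [← hfst h, this]
    · rw [hq]; simp only; rw [this]
  have hqmem : q ∈ orbitClosure t := by
    rw [mem_orbitClosure_iff]
    intro F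
    obtain ⟨g, hg⟩ := happ F
    exact ⟨g, fun h hh => (hg h hh).2⟩
  refine ⟨q, hqmem, ?_, ?_⟩
  · exact nuca_comp_eq_id happ (fun x => hr x)
  · exact nuca_comp_eq_id (fun F => by
      obtain ⟨g, hg⟩ := happ F
      exact ⟨g, fun h hh => ⟨(hg h hh).2, (hg h hh).1⟩⟩) (fun x => hl x)
end

section
/- Let G be a countable group and A a finite alphabet. Let τ : A^G → A^G be a pre-injective and stably post-surjective NUCA with finite memory. Then τ is stably invertible. -/
open Function Set Pointwise

namespace NucaProof

open Filter

variable {G : Type*} [Group G]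

/-- shift of a configuration -/
def shf {S : Type*} (g : G) (p : G → S) : G → S := fun h => p (g⁻¹ * h)

lemma shf_shf {S : Type*} (g k : G) (p : G → S) : shf g (shf k p) = shf (g * k) p := by
  funext h; simp [shf, mul_assoc]

lemma shf_one {S : Type*} (p : G → S) : shf (1 : G) p = p := by funext h; simp [shf]

lemma mem_orbitClosure_iff {S : Type*} (s p : G → S) :
    p ∈ orbitClosure s ↔ ∀ F : Finset G, ∃ g : G, ∀ h ∈ F, p h = s (g⁻¹ * h) := by
  letI : TopologicalSpace S := ⊥
  haveI : DiscreteTopology S := ⟨rfl⟩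
  constructor
  · intro hp F
    have hopen : IsOpen {q : G → S | ∀ h ∈ F, q h = p h} := by
      have : {q : G → S | ∀ h ∈ F, q h = p h} = Set.pi (F : Set G) (fun h => {p h}) := by
        ext q; simp [Set.mem_pi]
      rw [this]
      exact isOpen_set_pi F.finite_toSet (fun h _ => isOpen_discrete _)
    have := mem_closure_iff.mp hp _ hopen (fun h _ => rfl)
    obtain ⟨q, hq1, g, rfl⟩ := this
    exact ⟨g, fun h hh => (hq1 h hh).symm⟩
  · intro h
    rw [orbitClosure, mem_closure_iff]
    intro U hU hpU
    obtain ⟨I, u, hu, hsub⟩ := isOpen_pi_iff.mp hU p hpU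
    obtain ⟨g, hg⟩ := h I
    refine ⟨fun h => s (g⁻¹ * h), hsub ?_, g, rfl⟩
    intro i hi
    show s (g⁻¹ * i) ∈ u i
    rw [← hg i hi]
    exact (hu i hi).2

lemma orbitClosure_self {S : Type*} (s : G → S) : s ∈ orbitClosure s := by
  rw [mem_orbitClosure_iff]
  exact fun F => ⟨1, fun h _ => by simp⟩

lemma orbitClosure_shf {S : Type*} {s p : G → S} (hp : p ∈ orbitClosure s) (k : G) :
    shf k p ∈ orbitClosure s := by
  rw [mem_orbitClosure_iff] at hp ⊢
  intro F
  classical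
  obtain ⟨g, hg⟩ := hp (F.image (fun h => k⁻¹ * h))
  refine ⟨k * g, fun h hF => ?_⟩
  have := hg (k⁻¹ * h) (Finset.mem_image_of_mem _ hF)
  simpa [shf, mul_assoc] using this

lemma orbitClosure_of_approx {S : Type*} {s p : G → S}
    (h : ∀ F : Finset G, ∃ q ∈ orbitClosure s, ∀ g ∈ F, q g = p g) :
    p ∈ orbitClosure s := by
  rw [mem_orbitClosure_iff]
  intro F
  obtain ⟨q, hq, hqp⟩ := h F
  obtain ⟨g, hg⟩ := (mem_orbitClosure_iff s q).mp hq F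
  exact ⟨g, fun h hF => (hqp h hF) ▸ hg h hF⟩

/-- ultralimits of families of configurations with values in a finite type -/
lemma exists_ultralimit {ι : Type*} (U : Ultrafilter ι) {X : Type*} [Finite X] [Nonempty X]
    {G : Type*} (f : ι → G → X) : ∃ F : G → X, ∀ g, ∀ᶠ i in U, f i g = F g := by
  have key : ∀ g : G, ∃ c : X, ∀ᶠ i in U, f i g = c := by
    intro g
    by_contra hc
    push_neg at hc
    have h2 : ∀ c : X, ∀ᶠ i in U, f i g ≠ c := fun c =>
      hc c
    have h3 : ∀ᶠ i in (U : Filter ι), ∀ c ∈ (Set.univ : Set X), f i g ≠ c :=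
      (Filter.eventually_all_finite Set.finite_univ).mpr (fun c _ => h2 c)
    obtain ⟨i, hi⟩ := h3.exists
    exact hi (f i g) (Set.mem_univ _) rfl
  choose F hF using key
  exact ⟨F, hF⟩


section Nuca

variable {A : Type*}

lemma nuca_shf {M : Finset G} (p : G → ((M → A) → A)) (k : G) (x : G → A) :
    nuca (shf k p) (shf k x) = shf k (nuca p x) := by
  funext h
  show p (k⁻¹ * h) (fun m => x (k⁻¹ * (h * (m : G)))) = p (k⁻¹ * h) (fun m => x (k⁻¹ * h * (m : G)))
  congr 1; funext m; rw [mul_assoc]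

lemma shf_injective {S : Type*} (k : G) : Function.Injective (shf k : (G → S) → (G → S)) := by
  intro a b hab
  funext h
  have := congrFun hab (k * h)
  simpa [shf] using this

lemma nuca_congr {M : Finset G} {p p' : G → ((M → A) → A)} {x x' : G → A} {h : G}
    (hp : p h = p' h) (hx : ∀ m : G, m ∈ M → x (h * m) = x' (h * m)) :
    nuca p x h = nuca p' x' h := by
  show p h _ = p' h _
  rw [hp]; congr 1; funext m; exact hx m m.2

/-- the ultrafilter on `Finset G` extending `atTop` -/
noncomputable def UF (G : Type*) [Group G] : Ultrafilter (Finset G) := by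
  classical
  letI := Classical.decEq G
  exact Ultrafilter.of (atTop : Filter (Finset G))

lemma UF_mem (W : Finset G) : ∀ᶠ V in (UF G : Filter (Finset G)), W ⊆ V := by
  classical
  have h : ∀ᶠ V in (atTop : Filter (Finset G)), W ≤ V := Filter.eventually_ge_atTop W
  have hle : (UF G : Filter (Finset G)) ≤ (atTop : Filter (Finset G)) := Ultrafilter.of_le _
  exact h.filter_mono hle

variable [Fintype A] [Nonempty A]

lemma stableSurj {M : Finset G} {s : G → ((M → A) → A)}
    (hpost : StablyPostSurjective s) :
    ∀ p ∈ orbitClosure s, Function.Surjective (nuca p) := by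
  classical
  intro p hp w
  have happrox : ∀ F : Finset G, ∃ z : G → A, ∀ g ∈ F, nuca p z g = w g := by
    intro F
    obtain ⟨x0⟩ : Nonempty (G → A) := inferInstance
    set y : G → A := fun g => if g ∈ F then w g else nuca p x0 g with hy
    have hyas : Asymptotic y (nuca p x0) := ⟨F, fun g hg => by simp [hy, hg]⟩
    obtain ⟨z, _, hz⟩ := hpost p hp x0 y hyas
    exact ⟨z, fun g hg => by rw [hz]; simp [hy, hg]⟩
  choose zf hzf using happrox
  obtain ⟨z, hz⟩ := exists_ultralimit (UF G) zf
  refine ⟨z, ?_⟩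
  funext g
  have h1 : ∀ᶠ V in (UF G : Filter (Finset G)), ∀ m ∈ (M : Set G), zf V (g * m) = z (g * m) :=
    (Filter.eventually_all_finite M.finite_toSet).mpr (fun m _ => hz (g * m))
  have h2 : ∀ᶠ V in (UF G : Filter (Finset G)), g ∈ V :=
    (UF_mem {g}).mono (fun V hV => hV (Finset.mem_singleton_self g))
  obtain ⟨V, hV1, hV2⟩ := (h1.and h2).exists
  calc nuca p z g = nuca p (zf V) g :=
        nuca_congr rfl (fun m hm => (hV1 m hm).symm)
    _ = w g := hzf V g hV2


lemma uniformPost {M : Finset G} {s : G → ((M → A) → A)}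
    (hpost : StablyPostSurjective s) :
    ∃ V : Finset G, ∀ p ∈ orbitClosure s, ∀ x y : G → A,
      (∀ h : G, h ≠ 1 → y h = nuca p x h) →
      ∃ z : G → A, (∀ h, h ∉ V → z h = x h) ∧ nuca p z = y := by
  classical
  by_contra hcon
  push_neg at hcon
  choose pf hpf xf yf h1f h2f using hcon
  obtain ⟨p, hpl⟩ := exists_ultralimit (UF G) pf
  obtain ⟨x, hxl⟩ := exists_ultralimit (UF G) xf
  obtain ⟨y, hyl⟩ := exists_ultralimit (UF G) yf
  have hpmem : p ∈ orbitClosure s := by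
    apply orbitClosure_of_approx
    intro F
    have h1 : ∀ᶠ V in (UF G : Filter _), ∀ g ∈ (F : Set G), pf V g = p g :=
      (Filter.eventually_all_finite F.finite_toSet).mpr (fun g _ => hpl g)
    obtain ⟨V, hV⟩ := h1.exists
    exact ⟨pf V, hpf V, fun g hg => hV g hg⟩
  have hyx : ∀ h : G, h ≠ 1 → y h = nuca p x h := by
    intro h hne
    have e3 : ∀ᶠ V in (UF G : Filter _), ∀ m ∈ (M : Set G), xf V (h * m) = x (h * m) :=
      (Filter.eventually_all_finite M.finite_toSet).mpr (fun m _ => hxl (h * m))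
    obtain ⟨V, hV1, hV2, hV3⟩ := ((hyl h).and ((hpl h).and e3)).exists
    calc y h = yf V h := hV1.symm
      _ = nuca (pf V) (xf V) h := h1f V h hne
      _ = nuca p x h := nuca_congr hV2 (fun m hm => hV3 m hm)
  obtain ⟨z, ⟨Ω0, hΩ0⟩, hz⟩ := hpost p hpmem x y
    ⟨{1}, fun h hh => hyx h (by simpa using hh)⟩
  set K : Finset G := insert 1 (Ω0 * M⁻¹) with hK
  have e1 := UF_mem Ω0
  have e2 : ∀ᶠ V in (UF G : Filter _), ∀ h ∈ (K : Set G), pf V h = p h :=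
    (Filter.eventually_all_finite K.finite_toSet).mpr (fun h _ => hpl h)
  have e3 : ∀ᶠ V in (UF G : Filter _), ∀ h ∈ (K : Set G), yf V h = y h :=
    (Filter.eventually_all_finite K.finite_toSet).mpr (fun h _ => hyl h)
  have e4 : ∀ᶠ V in (UF G : Filter _), ∀ g ∈ ((K * M : Finset G) : Set G), xf V g = x g :=
    (Filter.eventually_all_finite (K * M).finite_toSet).mpr (fun g _ => hxl g)
  obtain ⟨V, hc1, hc2, hc3, hc4⟩ := (e1.and (e2.and (e3.and e4))).exists
  set zV : G → A := fun h => if h ∈ Ω0 then z h else xf V h with hzV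
  have hzVout : ∀ h, h ∉ V → zV h = xf V h := by
    intro h hh
    have : h ∉ Ω0 := fun hmem => hh (hc1 hmem)
    simp [hzV, this]
  apply h2f V zV hzVout
  funext h
  by_cases hhK : h ∈ K
  · have hagree : ∀ m : G, m ∈ M → zV (h * m) = z (h * m) := by
      intro m hm
      by_cases hmem : h * m ∈ Ω0
      · simp [hzV, hmem]
      · have : zV (h * m) = xf V (h * m) := by simp [hzV, hmem]
        rw [this, hc4 (h * m) (Finset.mul_mem_mul hhK hm), hΩ0 (h * m) hmem]
    calc nuca (pf V) zV h = nuca p z h := nuca_congr (hc2 h hhK) hagree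
      _ = y h := by rw [hz]
      _ = yf V h := (hc3 h hhK).symm
  · have hne : h ≠ 1 := fun h1 => hhK (h1 ▸ Finset.mem_insert_self 1 _)
    have hagree : ∀ m : G, m ∈ M → zV (h * m) = xf V (h * m) := by
      intro m hm
      have : h * m ∉ Ω0 := by
        intro hmem
        apply hhK
        rw [hK]
        refine Finset.mem_insert_of_mem ?_
        have := Finset.mul_mem_mul hmem (Finset.inv_mem_inv hm)
        simpa using this
      simp [hzV, this]
    calc nuca (pf V) zV h = nuca (pf V) (xf V) h := nuca_congr rfl hagree
      _ = yf V h := (h1f V h hne).symm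


lemma siteCorrect {M : Finset G} {s : G → ((M → A) → A)} {V : Finset G}
    (hV : ∀ p ∈ orbitClosure s, ∀ x y : G → A, (∀ h : G, h ≠ 1 → y h = nuca p x h) →
      ∃ z, (∀ h, h ∉ V → z h = x h) ∧ nuca p z = y)
    {p : G → ((M → A) → A)} (hp : p ∈ orbitClosure s) (g : G) (x y : G → A)
    (hy : ∀ h : G, h ≠ g → y h = nuca p x h) :
    ∃ z, (∀ h, h ∉ g • (V : Set G) → z h = x h) ∧ nuca p z = y := by
  have hp' : shf g⁻¹ p ∈ orbitClosure s := orbitClosure_shf hp g⁻¹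
  have hy' : ∀ h : G, h ≠ 1 → (shf g⁻¹ y) h = nuca (shf g⁻¹ p) (shf g⁻¹ x) h := by
    intro h hh
    rw [nuca_shf]
    show y ((g⁻¹)⁻¹ * h) = nuca p x ((g⁻¹)⁻¹ * h)
    apply hy
    simpa using hh
  obtain ⟨z', hz'out, hz'e⟩ := hV _ hp' _ _ hy'
  refine ⟨shf g z', ?_, ?_⟩
  · intro h hh
    have : g⁻¹ * h ∉ V := by
      intro hmem
      exact hh ⟨g⁻¹ * h, hmem, by simp⟩
    have := hz'out _ this
    show z' (g⁻¹ * h) = x h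
    rw [this]
    show x ((g⁻¹)⁻¹ * (g⁻¹ * h)) = x h
    congr 1
    simp
  · have : nuca (shf g (shf g⁻¹ p)) (shf g z') = shf g (nuca (shf g⁻¹ p) z') := nuca_shf _ g _
    rw [shf_shf, mul_inv_cancel, shf_one] at this
    rw [this, hz'e, shf_shf, mul_inv_cancel, shf_one]

lemma multiCorrect {M : Finset G} {s : G → ((M → A) → A)} {V : Finset G}
    (hV : ∀ p ∈ orbitClosure s, ∀ x y : G → A, (∀ h : G, h ≠ 1 → y h = nuca p x h) →
      ∃ z, (∀ h, h ∉ V → z h = x h) ∧ nuca p z = y)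
    {p : G → ((M → A) → A)} (hp : p ∈ orbitClosure s) (Ω : Finset G) :
    ∀ x y : G → A, (∀ h, h ∉ Ω → y h = nuca p x h) →
    ∃ z, (∀ h, h ∉ (Ω : Set G) * (V : Set G) → z h = x h) ∧ nuca p z = y := by
  classical
  induction Ω using Finset.induction with
  | empty =>
    intro x y hy
    exact ⟨x, fun h _ => rfl, funext fun h => (hy h (by simp)).symm⟩
  | @insert g Ω hgΩ ih =>
    intro x y hy
    set y1 : G → A := Function.update y g (nuca p x g) with hy1
    have hy1p : ∀ h, h ∉ Ω → y1 h = nuca p x h := by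
      intro h hh
      by_cases hhg : h = g
      · subst hhg; simp [hy1]
      · rw [hy1, Function.update_of_ne hhg]
        exact hy h (by simp [hhg, hh])
    obtain ⟨z1, hz1, hz1e⟩ := ih x y1 hy1p
    have hy2 : ∀ h, h ≠ g → y h = nuca p z1 h := by
      intro h hh
      rw [hz1e, hy1, Function.update_of_ne hh]
    obtain ⟨z, hzout, hze⟩ := siteCorrect hV hp g z1 y hy2
    refine ⟨z, ?_, hze⟩
    intro h hh
    have hsplit : ((insert g Ω : Finset G) : Set G) * (V : Set G)
        = g • (V : Set G) ∪ (Ω : Set G) * (V : Set G) := by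
      ext a
      simp only [Finset.coe_insert, Set.mem_union, Set.mem_mul, Set.mem_insert_iff,
        Set.mem_smul_set, smul_eq_mul]
      constructor
      · rintro ⟨w, (rfl | hw), v, hv, rfl⟩
        · exact Or.inl ⟨v, hv, rfl⟩
        · exact Or.inr ⟨w, hw, v, hv, rfl⟩
      · rintro (⟨v, hv, rfl⟩ | ⟨w, hw, v, hv, rfl⟩)
        · exact ⟨g, Or.inl rfl, v, hv, rfl⟩
        · exact ⟨w, Or.inr hw, v, hv, rfl⟩
    rw [hsplit] at hh
    rw [hzout h (fun hm => hh (Or.inl hm)), hz1 h (fun hm => hh (Or.inr hm))]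

lemma stableInj {M : Finset G} {s : G → ((M → A) → A)}
    (hpre : PreInjective (nuca s)) (hpost : StablyPostSurjective s) :
    StablyInjective s := by
  classical
  obtain ⟨V, hV⟩ := uniformPost hpost
  intro p hp x y hxy
  by_contra hne
  have hex : ∃ g0, x g0 ≠ y g0 := by
    by_contra h; push_neg at h; exact hne (funext h)
  obtain ⟨g0, hg0⟩ := hex
  set B : Finset G := insert 1 (V⁻¹ * M ∪ M) with hB
  set E : Finset G := Finset.image (fun b => g0 * b) B with hE
  have hg0E : g0 ∈ E := by
    rw [hE]
    exact Finset.mem_image.mpr ⟨1, by simp [hB], by simp⟩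
  set y' : G → A := fun h => if h ∈ E then y h else x h with hy'
  set Ω : Finset G := (E * M⁻¹).filter (fun h => ¬ ∀ m ∈ M, h * m ∈ E) with hΩ
  have hoff : ∀ h, h ∉ Ω → nuca p x h = nuca p y' h := by
    intro h hh
    by_cases hEM : h ∈ E * M⁻¹
    · have hall : ∀ m ∈ M, h * m ∈ E := by
        by_contra hcon
        exact hh (Finset.mem_filter.mpr ⟨hEM, hcon⟩)
      have : nuca p y' h = nuca p y h :=
        nuca_congr rfl (fun m hm => by simp [hy', hall m hm])
      rw [this, ← hxy]
    · have hall : ∀ m ∈ M, h * m ∉ E := by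
        intro m hm hmem
        apply hEM
        have := Finset.mul_mem_mul hmem (Finset.inv_mem_inv hm)
        simpa using this
      exact (nuca_congr rfl (fun m hm => by simp [hy', hall m hm])).symm
  obtain ⟨z, hzout, hze⟩ := multiCorrect hV hp Ω y' (nuca p x) hoff
  have hg0ΩV : g0 ∉ (Ω : Set G) * (V : Set G) := by
    rintro ⟨w, hw, v, hv, hwv⟩
    rw [hΩ] at hw
    obtain ⟨-, hw2⟩ := Finset.mem_filter.mp hw
    apply hw2
    intro m hm
    have hwg0 : w = g0 * v⁻¹ := by rw [← hwv]; group
    have : w * m = g0 * (v⁻¹ * m) := by rw [hwg0]; group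
    rw [this, hE]
    refine Finset.mem_image.mpr ⟨v⁻¹ * m, ?_, rfl⟩
    rw [hB]
    exact Finset.mem_insert_of_mem (Finset.mem_union_left _
      (Finset.mul_mem_mul (Finset.inv_mem_inv hv) hm))
  have hzg0 : z g0 = y g0 := by
    rw [hzout g0 hg0ΩV]; simp [hy', hg0E]
  have hzx : ∀ h, h ∉ E → h ∉ (Ω : Set G) * (V : Set G) → z h = x h := by
    intro h h1 h2
    rw [hzout h h2]; simp [hy', h1]
  -- transfer to s
  set D : Finset G := E ∪ (Ω * V) with hD
  have hzxD : ∀ h, h ∉ D → z h = x h := by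
    intro h hh
    rw [hD, Finset.mem_union] at hh
    push_neg at hh
    refine hzx h hh.1 ?_
    rintro ⟨w, hw, v, hv, hwv⟩
    exact hh.2 (hwv ▸ Finset.mul_mem_mul hw hv)
  obtain ⟨g, hg⟩ := (mem_orbitClosure_iff s p).mp hp (D * M⁻¹)
  have hkey : nuca (shf g s) z = nuca (shf g s) x := by
    funext h
    by_cases hcase : ∀ m ∈ M, h * m ∉ D
    · exact nuca_congr rfl (fun m hm => by rw [hzxD _ (hcase m hm)])
    · push_neg at hcase
      obtain ⟨m, hm, hmD⟩ := hcase
      have hhD : h ∈ D * M⁻¹ := by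
        have := Finset.mul_mem_mul hmD (Finset.inv_mem_inv hm)
        simpa using this
      have hpsh : (shf g s) h = p h := by
        show s (g⁻¹ * h) = p h
        exact (hg h hhD).symm
      calc nuca (shf g s) z h = nuca p z h := nuca_congr hpsh (fun _ _ => rfl)
        _ = nuca p x h := by rw [hze]
        _ = nuca (shf g s) x h := nuca_congr hpsh.symm (fun _ _ => rfl)
  set zt : G → A := shf g⁻¹ z with hzt
  set xt : G → A := shf g⁻¹ x with hxt
  have hzs : shf g zt = z := by rw [hzt, shf_shf, mul_inv_cancel, shf_one]
  have hxs : shf g xt = x := by rw [hxt, shf_shf, mul_inv_cancel, shf_one]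
  have hkey2 : nuca s zt = nuca s xt := by
    apply shf_injective g
    rw [← nuca_shf, ← nuca_shf, hzs, hxs, hkey]
  have hasym : Asymptotic zt xt := by
    refine ⟨D.image (fun d => g⁻¹ * d), fun h hh => ?_⟩
    show z (g⁻¹⁻¹ * h) = x (g⁻¹⁻¹ * h)
    rw [inv_inv]
    apply hzxD
    intro hmem
    exact hh (Finset.mem_image.mpr ⟨g * h, hmem, by group⟩)
  have := hpre zt xt hasym hkey2
  have hzx2 : z = x := by rw [← hzs, ← hxs, this]
  rw [hzx2] at hzg0
  exact hg0 (hzg0 ▸ rfl)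


lemma ultralimit_mem_orbitClosure {S : Type*} {s : G → S} {sf : Finset G → G → S} {p : G → S}
    (hmem : ∀ N, sf N ∈ orbitClosure s)
    (hl : ∀ g, ∀ᶠ N in (UF G : Filter (Finset G)), sf N g = p g) :
    p ∈ orbitClosure s := by
  apply orbitClosure_of_approx
  intro F
  have h1 : ∀ᶠ V in (UF G : Filter _), ∀ g ∈ (F : Set G), sf V g = p g :=
    (Filter.eventually_all_finite F.finite_toSet).mpr (fun g _ => hl g)
  obtain ⟨V, hV⟩ := h1.exists
  exact ⟨sf V, hmem V, fun g hg => hV g hg⟩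

lemma ultralimit_nuca {M : Finset G} {pf : Finset G → G → ((M → A) → A)}
    {xf yf : Finset G → G → A} {p : G → ((M → A) → A)} {x y : G → A}
    (hpl : ∀ g, ∀ᶠ N in (UF G : Filter (Finset G)), pf N g = p g)
    (hxl : ∀ g, ∀ᶠ N in (UF G : Filter (Finset G)), xf N g = x g)
    (hyl : ∀ g, ∀ᶠ N in (UF G : Filter (Finset G)), yf N g = y g)
    (he : ∀ N, nuca (pf N) (xf N) = yf N) :
    nuca p x = y := by
  funext g
  have e3 : ∀ᶠ V in (UF G : Filter _), ∀ m ∈ (M : Set G), xf V (g * m) = x (g * m) :=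
    (Filter.eventually_all_finite M.finite_toSet).mpr (fun m _ => hxl (g * m))
  obtain ⟨V, hV1, hV2, hV3⟩ := ((hpl g).and ((hyl g).and e3)).exists
  calc nuca p x g = nuca (pf V) (xf V) g := nuca_congr hV1.symm (fun m hm => (hV3 m hm).symm)
    _ = yf V g := by rw [he V]
    _ = y g := hV2

lemma uniformInv {M : Finset G} {s : G → ((M → A) → A)}
    (hinj : StablyInjective s) :
    ∃ N : Finset G, ∀ p p' : G → ((M → A) → A), p ∈ orbitClosure s → p' ∈ orbitClosure s →
      ∀ x x' y y' : G → A, nuca p x = y → nuca p' x' = y' →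
      (∀ h ∈ N, p h = p' h) → (∀ h ∈ N, y h = y' h) → x 1 = x' 1 := by
  classical
  by_contra hcon
  push_neg at hcon
  choose pf p'f hpf hp'f xf x'f yf y'f he he' hpe hye hne using hcon
  obtain ⟨p, hpl⟩ := exists_ultralimit (UF G) pf
  obtain ⟨p', hp'l⟩ := exists_ultralimit (UF G) p'f
  obtain ⟨x, hxl⟩ := exists_ultralimit (UF G) xf
  obtain ⟨x', hx'l⟩ := exists_ultralimit (UF G) x'f
  obtain ⟨y, hyl⟩ := exists_ultralimit (UF G) yf
  obtain ⟨y', hy'l⟩ := exists_ultralimit (UF G) y'f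
  have hpmem : p ∈ orbitClosure s := ultralimit_mem_orbitClosure hpf hpl
  have hp'mem : p' ∈ orbitClosure s := ultralimit_mem_orbitClosure hp'f hp'l
  have hmemg : ∀ g : G, ∀ᶠ N in (UF G : Filter (Finset G)), g ∈ N := fun g =>
    (UF_mem {g}).mono (fun V hV => hV (Finset.mem_singleton_self g))
  have hpp' : p = p' := by
    funext g
    obtain ⟨N, h1, h2, h3⟩ := ((hpl g).and ((hp'l g).and (hmemg g))).exists
    rw [← h1, ← h2, hpe N g h3]
  have hyy' : y = y' := by
    funext g
    obtain ⟨N, h1, h2, h3⟩ := ((hyl g).and ((hy'l g).and (hmemg g))).exists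
    rw [← h1, ← h2, hye N g h3]
  have hxy : nuca p x = y := ultralimit_nuca hpl hxl hyl he
  have hx'y : nuca p x' = y := by
    rw [hpp', hyy']
    exact ultralimit_nuca hp'l hx'l hy'l he'
  have hxx' : x = x' := hinj p hpmem (by rw [hxy, hx'y])
  obtain ⟨N, h1, h2⟩ := ((hxl 1).and (hx'l 1)).exists
  exact hne N (by rw [h1, h2, hxx'])

open Classical in
/-- a choice of preimage under `nuca p` -/
noncomputable def invc {M : Finset G} (p : G → ((M → A) → A)) (y : G → A) : G → A :=
  if h : ∃ x, nuca p x = y then Classical.choose h else y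

lemma invc_spec {M : Finset G} {p : G → ((M → A) → A)} {y : G → A}
    (h : ∃ x, nuca p x = y) : nuca p (invc p y) = y := by
  unfold invc
  rw [dif_pos h]
  exact Classical.choose_spec h

open Classical in
/-- extend a pattern on `N` by a default value -/
noncomputable def extN (N : Finset G) (a0 : A) (u : {x // x ∈ N} → A) : G → A :=
  fun g => if hg : g ∈ N then u ⟨g, hg⟩ else a0

lemma extN_mem (N : Finset G) (a0 : A) (u : {x // x ∈ N} → A) {n : G} (hn : n ∈ N) :
    extN N a0 u n = u ⟨n, hn⟩ := by
  unfold extN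
  rw [dif_pos hn]

/-- the candidate configuration of local defining maps for the inverse -/
noncomputable def qdef {M : Finset G} (N : Finset G) (a0 : A)
    (p : G → ((M → A) → A)) : G → ((N → A) → A) :=
  fun g u => invc (shf g⁻¹ p) (extN N a0 u) 1

lemma nuca_qdef {M N : Finset G} {s : G → ((M → A) → A)}
    (hsurj : ∀ p ∈ orbitClosure s, Function.Surjective (nuca p))
    (hN : ∀ p p' : G → ((M → A) → A), p ∈ orbitClosure s → p' ∈ orbitClosure s →
      ∀ x x' y y' : G → A, nuca p x = y → nuca p' x' = y' →
      (∀ h ∈ N, p h = p' h) → (∀ h ∈ N, y h = y' h) → x 1 = x' 1)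
    (a0 : A) {p : G → ((M → A) → A)} (hp : p ∈ orbitClosure s) (y : G → A) :
    nuca (qdef N a0 p) y = invc p y := by
  funext h
  have hx : nuca p (invc p y) = y := invc_spec (hsurj p hp y)
  show invc (shf h⁻¹ p) (extN N a0 (fun n => y (h * (n : G)))) 1 = invc p y h
  set u : {x // x ∈ N} → A := fun n => y (h * (n : G)) with hu
  have hp1 : shf h⁻¹ p ∈ orbitClosure s := orbitClosure_shf hp h⁻¹
  have he1 : nuca (shf h⁻¹ p) (invc (shf h⁻¹ p) (extN N a0 u)) = extN N a0 u :=
    invc_spec (hsurj _ hp1 _)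
  have he2 : nuca (shf h⁻¹ p) (shf h⁻¹ (invc p y)) = shf h⁻¹ y := by
    rw [nuca_shf, hx]
  have hagr : ∀ n ∈ N, extN N a0 u n = (shf h⁻¹ y) n := by
    intro n hn
    rw [extN_mem N a0 u hn]
    show y (h * n) = y (h⁻¹⁻¹ * n)
    rw [inv_inv]
  have := hN _ _ hp1 hp1 _ _ _ _ he1 he2 (fun _ _ => rfl) hagr
  rw [this]
  show invc p y (h⁻¹⁻¹ * 1) = invc p y h
  rw [inv_inv, mul_one]

lemma qdef_mem {M N : Finset G} {s : G → ((M → A) → A)}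
    (hsurj : ∀ p ∈ orbitClosure s, Function.Surjective (nuca p))
    (hN : ∀ p p' : G → ((M → A) → A), p ∈ orbitClosure s → p' ∈ orbitClosure s →
      ∀ x x' y y' : G → A, nuca p x = y → nuca p' x' = y' →
      (∀ h ∈ N, p h = p' h) → (∀ h ∈ N, y h = y' h) → x 1 = x' 1)
    (a0 : A) {p : G → ((M → A) → A)} (hp : p ∈ orbitClosure s) :
    qdef N a0 p ∈ orbitClosure (qdef N a0 s) := by
  classical
  rw [mem_orbitClosure_iff]
  intro F
  obtain ⟨g, hg⟩ := (mem_orbitClosure_iff s p).mp hp (F * N)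
  refine ⟨g, fun h hF => ?_⟩
  funext u
  show invc (shf h⁻¹ p) (extN N a0 u) 1 = invc (shf (g⁻¹ * h)⁻¹ s) (extN N a0 u) 1
  have hmem1 : shf h⁻¹ p ∈ orbitClosure s := orbitClosure_shf hp h⁻¹
  have hmem2 : shf (g⁻¹ * h)⁻¹ s ∈ orbitClosure s :=
    orbitClosure_shf (orbitClosure_self s) _
  have hagr : ∀ n ∈ N, (shf h⁻¹ p) n = (shf (g⁻¹ * h)⁻¹ s) n := by
    intro n hn
    show p (h⁻¹⁻¹ * n) = s ((g⁻¹ * h)⁻¹⁻¹ * n)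
    rw [inv_inv, inv_inv]
    rw [hg (h * n) (Finset.mul_mem_mul hF hn)]
    congr 1
    group
  exact hN _ _ hmem1 hmem2 _ _ _ _ (invc_spec (hsurj _ hmem1 _))
    (invc_spec (hsurj _ hmem2 _)) hagr (fun _ _ => rfl)

end Nuca

end NucaProof




/-- a pre-injective and stably post-surjective NUCA with finite
memory over a countable group and finite alphabet is stably invertible. -/
theorem preInjective_stablyPostSurjective_implies_stablyInvertible
    {G A : Type*} [Group G] [Countable G] [Fintype A]
    {M : Finset G} (s : G → ((M → A) → A))
    (hpre : PreInjective (nuca s)) (hpost : StablyPostSurjective s) :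
    StablyInvertible s := by
  classical
  by_cases hA : Nonempty A
  · haveI := hA
    have hinj : StablyInjective s := NucaProof.stableInj hpre hpost
    have hsurj := NucaProof.stableSurj hpost
    obtain ⟨N, hN⟩ := NucaProof.uniformInv hinj
    obtain ⟨a0⟩ := hA
    refine ⟨N, NucaProof.qdef N a0 s, fun p hp => ?_⟩
    refine ⟨NucaProof.qdef N a0 p, NucaProof.qdef_mem hsurj hN a0 hp, ?_, ?_⟩
    · funext y
      show nuca p (nuca (NucaProof.qdef N a0 p) y) = y
      rw [NucaProof.nuca_qdef hsurj hN a0 hp y]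
      exact NucaProof.invc_spec (hsurj p hp y)
    · funext x
      show nuca (NucaProof.qdef N a0 p) (nuca p x) = x
      rw [NucaProof.nuca_qdef hsurj hN a0 hp (nuca p x)]
      apply hinj p hp
      exact NucaProof.invc_spec (hsurj p hp (nuca p x))
  · rw [not_nonempty_iff] at hA
    refine ⟨{1}, fun _ u => (hA.elim (u ⟨1, Finset.mem_singleton_self 1⟩) : A),
      fun p hp => ?_⟩
    refine ⟨_, NucaProof.orbitClosure_self _, ?_, ?_⟩ <;>
      · funext x
        exact (hA.elim (x 1))
end

section
/- Let G be a group, A an alphabet, and M, N ⊆ G finite subsets with 1_G ∈ M ∩ N. Let S = A^(A^M), T = A^(A^N), s ∈ S^G, t ∈ T^G, and g ∈ G. Then the condition σ_t(σ_s(x))(g) = x(g) for all x ∈ A^G holds if and only if for every y ∈ A^(NM) one has t(g)(h ↦ f^{+M}_{gN, s|_{gN}}(g·y)(gh)) = y(1_G), where g·y ∈ A^(gNM) is the configuration defined by (g·y)(gh) = y(h) for h ∈ NM, and the outer map h ↦ … is viewed as an element of A^N. -/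
open Function Set Pointwise

/-- The induced local map `f^{+M}_{E,w} : A^(EM) → A^E`,
`f^{+M}_{E,w}(x)(g) = w(g)((g⁻¹x)|_M)`. -/
def inducedLocalMap {G A : Type*} [Group G] (M : Finset G) (E : Set G)
    (w : E → ((M → A) → A)) :
    ((E * (M : Set G) : Set G) → A) → (E → A) :=
  fun x e => w e fun m =>
    x ⟨(e : G) * m, Set.mul_mem_mul e.2 (Finset.mem_coe.mpr m.2)⟩

lemma mem_NM_of_mem_smul_mul {G : Type*} [Group G] {N M : Set G} {g k : G}
    (hk : k ∈ (g • N) * M) : g⁻¹ * k ∈ N * M := by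
  rw [Set.mem_mul] at hk
  obtain ⟨a, ha, b, hb, rfl⟩ := hk
  rw [Set.mem_smul_set] at ha
  obtain ⟨n, hn, rfl⟩ := ha
  rw [Set.mem_mul]
  exact ⟨n, hn, b, hb, by simp [smul_eq_mul, mul_assoc]⟩

/-- `σ_t(σ_s(x))(g) = x(g)` for all `x ∈ A^G` iff for every
`y ∈ A^(NM)`, `t(g)(h ↦ f^{+M}_{gN, s|_gN}(g·y)(gh)) = y(1_G)`, where
`(g·y)(gh) = y(h)` for `h ∈ NM`. -/
theorem compo_id_iff {G A : Type*} [Group G]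
    {M N : Finset G} (hM : (1 : G) ∈ M) (hN : (1 : G) ∈ N)
    (s : G → ((M → A) → A)) (t : G → ((N → A) → A)) (g : G) :
    (∀ x : G → A, nuca t (nuca s x) g = x g) ↔
      ∀ y : ((N : Set G) * (M : Set G) : Set G) → A,
        t g (fun h =>
          inducedLocalMap M (g • (N : Set G)) (fun a => s a)
            (fun k => y ⟨g⁻¹ * k, mem_NM_of_mem_smul_mul k.2⟩)
            ⟨g * (h : G), Set.mem_smul_set.mpr ⟨h, Finset.mem_coe.mpr h.2, rfl⟩⟩) =
        y ⟨1, by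
          rw [Set.mem_mul]
          exact ⟨1, Finset.mem_coe.mpr hN, 1, Finset.mem_coe.mpr hM, one_mul 1⟩⟩ := by
  
  classical
  have h1NM : (1 : G) ∈ (N : Set G) * (M : Set G) :=
    Set.mem_mul.mpr ⟨1, Finset.mem_coe.mpr hN, 1, Finset.mem_coe.mpr hM, one_mul 1⟩
  constructor
  · intro H y
    set x : G → A := fun k =>
      if hk : g⁻¹ * k ∈ (N : Set G) * (M : Set G) then y ⟨g⁻¹ * k, hk⟩
      else y ⟨1, h1NM⟩ with hx
    have hxg : x g = y ⟨1, h1NM⟩ := by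
      have : g⁻¹ * g ∈ (N : Set G) * (M : Set G) := by simpa using h1NM
      simp only [hx, dif_pos this]
      exact congrArg y (Subtype.ext (by simp))
    have hmain := H x
    have harg : (fun h : (N : Finset G) =>
        inducedLocalMap M (g • (N : Set G)) (fun a => s a)
          (fun k => y ⟨g⁻¹ * k, mem_NM_of_mem_smul_mul k.2⟩)
          ⟨g * (h : G), Set.mem_smul_set.mpr ⟨h, Finset.mem_coe.mpr h.2, rfl⟩⟩)
        = (fun h : (N : Finset G) => nuca s x (g * h)) := by
      funext h
      show s (g * (h : G)) _ = s (g * (h : G)) _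
      congr 1
      funext m
      have hmem : g⁻¹ * (g * (h : G) * (m : G)) ∈ (N : Set G) * (M : Set G) := by
        have : g⁻¹ * (g * (h : G) * (m : G)) = (h : G) * (m : G) := by group
        rw [this]
        exact Set.mul_mem_mul (Finset.mem_coe.mpr h.2) (Finset.mem_coe.mpr m.2)
      show y _ = x (g * (h : G) * (m : G))
      simp only [hx, dif_pos hmem]
    calc t g _ = t g (fun h : (N : Finset G) => nuca s x (g * h)) := by rw [harg]
      _ = nuca t (nuca s x) g := rfl
      _ = x g := hmain
      _ = y ⟨1, h1NM⟩ := hxg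
  · intro H x
    have := H (fun k => x (g * (k : G)))
    show t g (fun h : (N : Finset G) => nuca s x (g * h)) = x g
    have harg : (fun h : (N : Finset G) => nuca s x (g * h)) =
        (fun h : (N : Finset G) =>
          inducedLocalMap M (g • (N : Set G)) (fun a => s a)
            (fun k => x (g * (g⁻¹ * (k : G))))
            ⟨g * (h : G), Set.mem_smul_set.mpr ⟨h, Finset.mem_coe.mpr h.2, rfl⟩⟩) := by
      funext h
      show s (g * (h : G)) _ = s (g * (h : G)) _
      congr 1
      funext m
      show x (g * (h : G) * (m : G)) = x (g * (g⁻¹ * (g * (h : G) * (m : G))))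
      rw [mul_inv_cancel_left]
    rw [harg]
    calc _ = x (g * (1 : G)) := this
      _ = x g := by rw [mul_one]
end

section
/- (Theorem A) Let M be a finite subset of a countable surjunctive group G. Let A be a finite alphabet and S = A^(A^M). Suppose that σ_s is stably injective for some asymptotically constant s ∈ S^G. Then σ_s is stably invertible. -/
open Function Set Pointwise

section Aux

variable {G : Type*} [Group G]

lemma orbitClosure_cases {S : Type*} (s : G → S) (c : S) (Ω₀ : Finset G)
    (hs : ∀ g, g ∉ Ω₀ → s g = c) {p : G → S} (hp : p ∈ orbitClosure s) :
    (∃ g : G, p = fun h => s (g⁻¹ * h)) ∨ p = fun _ => c := by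
  classical
  rw [mem_orbitClosure_iff] at hp
  by_cases hP : ∃ g : G, p = fun h => s (g⁻¹ * h)
  · exact Or.inl hP
  right
  push_neg at hP
  have hbad : ∀ g : G, ∃ h, p h ≠ s (g⁻¹ * h) := fun g => Function.ne_iff.mp (hP g)
  choose f hf using hbad
  funext h₀
  by_contra hph₀
  set K : Finset G := Ω₀.image (fun ω => h₀ * ω⁻¹) with hK
  obtain ⟨g, hg⟩ := hp (insert h₀ (K.image f))
  have h1 : p h₀ = s (g⁻¹ * h₀) := hg h₀ (Finset.mem_insert_self _ _)
  have h2 : g⁻¹ * h₀ ∈ Ω₀ := by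
    by_contra h2
    exact hph₀ (h1.trans (hs _ h2))
  have hgK : g ∈ K := by
    rw [hK]
    refine Finset.mem_image.mpr ⟨g⁻¹ * h₀, h2, ?_⟩
    group
  exact hf g (hg (f g) (Finset.mem_insert_of_mem (Finset.mem_image_of_mem f hgK)))

lemma const_mem_transfer {S T : Type*} (s : G → S) (c : S) (t : G → T) (c' : T)
    (Ω₀ N₀ E : Finset G)
    (hΩ : ∀ u ∈ Ω₀, s u ≠ c)
    (hE : ∀ g ∈ E, ∃ ω ∈ Ω₀, ∃ m ∈ N₀, g = ω * m⁻¹)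
    (ht : ∀ g, g ∉ E → t g = c')
    (hc : (fun _ => c) ∈ orbitClosure s) :
    (fun _ => c') ∈ orbitClosure t := by
  classical
  rw [mem_orbitClosure_iff] at hc ⊢
  intro F
  obtain ⟨g, hg⟩ := hc (F.biUnion (fun h => N₀.image (h * ·)))
  refine ⟨g, fun h hF => (ht _ ?_).symm⟩
  intro hgE
  obtain ⟨ω, hω, m, hm, heq⟩ := hE _ hgE
  have hmem : h * m ∈ F.biUnion (fun h => N₀.image (h * ·)) :=
    Finset.mem_biUnion.mpr ⟨h, hF, Finset.mem_image.mpr ⟨m, hm, rfl⟩⟩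
  have hval : c = s (g⁻¹ * (h * m)) := hg _ hmem
  have : g⁻¹ * (h * m) = ω := by
    rw [← mul_assoc, heq]; group
  rw [this] at hval
  exact hΩ ω hω hval.symm

end Aux
section Aux2

variable {G : Type*} [Group G] {A : Type*}

lemma nuca_smul {M : Finset G} (s : G → ((M → A) → A)) (g : G) (x : G → A) :
    nuca (fun h => s (g⁻¹ * h)) x = fun h => nuca s (fun h' => x (g * h')) (g⁻¹ * h) := by
  funext h
  simp only [nuca]
  congr 1
  funext m
  congr 1
  group

lemma nuca_conj_comp {M N : Finset G} (s : G → ((M → A) → A)) (t : G → ((N → A) → A))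
    (hst : nuca s ∘ nuca t = id) (g : G) :
    nuca (fun h => s (g⁻¹ * h)) ∘ nuca (fun h => t (g⁻¹ * h)) = id := by
  funext x h
  simp only [Function.comp_apply, id_eq]
  rw [nuca_smul t g x, nuca_smul s g _]
  simp only [inv_mul_cancel_left]
  have hz : nuca s (nuca t fun h' => x (g * h')) = fun h' => x (g * h') :=
    congrFun hst _
  rw [hz]
  simp [mul_inv_cancel_left]

lemma nuca_continuous [TopologicalSpace A] [DiscreteTopology A] {M : Finset G}
    (s : G → ((M → A) → A)) : Continuous (nuca s) := by
  refine continuous_pi fun g => ?_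
  have : (fun x : G → A => nuca s x g)
      = (s g) ∘ (fun (x : G → A) (m : M) => x (g * m)) := rfl
  rw [this]
  exact continuous_of_discreteTopology.comp (continuous_pi fun m => continuous_apply _)

lemma exists_finite_window {G A : Type*} [TopologicalSpace A] [DiscreteTopology A] [Finite A]
    (F : (G → A) → A) (hF : Continuous F) :
    ∃ I : Finset G, ∀ y y' : G → A, (∀ i ∈ I, y i = y' i) → F y = F y' := by
  classical
  have hx : ∀ x : G → A, ∃ (I : Finset G) (u : ∀ _ : G, Set A),
      (∀ a ∈ I, IsOpen (u a) ∧ x a ∈ u a) ∧ (I : Set G).pi u ⊆ F ⁻¹' {F x} :=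
    fun x => isOpen_pi_iff.mp (hF.isOpen_preimage _ (isOpen_discrete _)) x rfl
  choose I u hIu hsub using hx
  have hcover : (Set.univ : Set (G → A))
      ⊆ ⋃ x, ⋂ i ∈ I x, (fun y : G → A => y i) ⁻¹' {x i} := by
    intro x _
    exact Set.mem_iUnion.mpr ⟨x, by simp⟩
  obtain ⟨T, hT⟩ := isCompact_univ.elim_finite_subcover _
    (fun x => isOpen_biInter_finset fun i _ =>
      (continuous_apply i).isOpen_preimage _ (isOpen_discrete _)) hcover
  refine ⟨T.biUnion I, fun y y' hyy' => ?_⟩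
  obtain ⟨x, hxT, hyx⟩ := Set.mem_iUnion₂.mp (hT (Set.mem_univ y))
  simp only [Set.mem_iInter, Set.mem_preimage, Set.mem_singleton_iff] at hyx
  have h1 : F y = F x := hsub x (fun i hi => by
    rw [hyx i hi]  -- y i ∈ u x i
    exact (hIu x i hi).2)
  have h2 : F y' = F x := hsub x (fun i hi => by
    rw [← hyy' i (Finset.mem_biUnion.mpr ⟨x, hxT, hi⟩), hyx i hi]
    exact (hIu x i hi).2)
  rw [h1, h2]

end Aux2
/-- Theorem A: over a countable surjunctive group universe and a
finite alphabet, every stably injective NUCA with finite memory and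
asymptotically constant configuration of local defining maps is stably
invertible. -/
theorem theoremA {G : Type*} [Group G] [Countable G] (hG : Surjunctive G)
    {A : Type*} [Fintype A] {M : Finset G} (s : G → ((M → A) → A))
    (hconst : AsymptoticallyConstant s) (hinj : StablyInjective s) :
    StablyInvertible s := by
  classical
  obtain ⟨c, Ω, hΩc⟩ := hconst
  -- trivial case: empty alphabet
  rcases isEmpty_or_nonempty A with hA | hA
  · refine ⟨{1}, fun _ pat => pat ⟨1, Finset.mem_singleton_self 1⟩, fun p hp => ?_⟩
    refine ⟨fun _ pat => pat ⟨1, Finset.mem_singleton_self 1⟩,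
      (mem_orbitClosure_iff _ _).mpr (fun F => ⟨1, fun h _ => rfl⟩),
      funext fun x => (hA.false (x 1)).elim, funext fun x => (hA.false (x 1)).elim⟩
  haveI : Inhabited A := Classical.inhabited_of_nonempty hA
  set Ω₀ : Finset G := Ω.filter (fun g => s g ≠ c) with hΩ₀def
  have hΩ₀in : ∀ u, s u ≠ c → u ∈ Ω₀ := by
    intro u hu
    rw [hΩ₀def]
    refine Finset.mem_filter.mpr ⟨?_, hu⟩
    by_contra hnot
    exact hu (hΩc u hnot)
  have hΩ₀out : ∀ u ∈ Ω₀, s u ≠ c := by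
    intro u hu
    rw [hΩ₀def] at hu
    exact (Finset.mem_filter.mp hu).2
  have hs_off : ∀ g, g ∉ Ω₀ → s g = c := fun g hg => not_not.mp (fun h => hg (hΩ₀in g h))
  have hsmem : s ∈ orbitClosure s :=
    (mem_orbitClosure_iff s s).mpr fun F => ⟨1, fun h _ => by rw [inv_one, one_mul]⟩
  have hτinj : Function.Injective (nuca s) := hinj s hsmem
  by_cases hcc : (fun _ : G => c) ∈ orbitClosure s
  · -- MAIN CASE
    have hσinj : Function.Injective (nuca (fun _ : G => c)) := hinj _ hcc
    have hσsurj : Function.Surjective (nuca (fun _ : G => c)) := by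
      obtain ⟨n, ⟨e⟩⟩ : ∃ n, Nonempty (A ≃ Fin n) := ⟨_, ⟨Fintype.equivFin A⟩⟩
      set μB : ((M → Fin n) → Fin n) := fun pat => e (c fun m => e.symm (pat m)) with hμB
      have hrel : ∀ (x : G → Fin n) (g : G),
          nuca (fun _ : G => μB) x g
            = e (nuca (fun _ : G => c) (fun h => e.symm (x h)) g) := by
        intro x g
        rw [hμB]
        rfl
      have hBinj : Function.Injective (nuca (fun _ : G => μB)) := by
        intro x y hxy
        have h1 : (fun h => e.symm (x h)) = (fun h => e.symm (y h)) :=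
          hσinj (funext fun g =>
            e.injective (((hrel x g).symm.trans (congrFun hxy g)).trans (hrel y g)))
        funext g
        exact e.symm.injective (congrFun h1 g)
      intro y
      obtain ⟨x, hx⟩ := hG (Fin n) (nuca (fun _ : G => μB)) ⟨M, μB, rfl⟩ hBinj (fun g => e (y g))
      refine ⟨fun h => e.symm (x h), funext fun g => ?_⟩
      exact e.injective ((hrel x g).symm.trans (congrFun hx g))
    letI : TopologicalSpace A := ⊥
    haveI : DiscreteTopology A := ⟨rfl⟩
    obtain ⟨ρ, hρσ, hσρ, hρcont⟩ : ∃ ρ : (G → A) → (G → A),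
        (∀ x, ρ (nuca (fun _ : G => c) x) = x) ∧ (∀ y, nuca (fun _ : G => c) (ρ y) = y)
          ∧ Continuous ρ := by
      have hbij : Function.Bijective (nuca (fun _ : G => c)) := ⟨hσinj, hσsurj⟩
      exact ⟨⇑(Equiv.ofBijective _ hbij).symm,
        fun x => (Equiv.ofBijective _ hbij).symm_apply_apply x,
        fun y => (Equiv.ofBijective _ hbij).apply_symm_apply y,
        Homeomorph.continuous_symm
          ((nuca_continuous _).homeoOfEquivCompactToT2 (f := Equiv.ofBijective _ hbij))⟩
    have hρinj : Function.Injective ρ := fun y y' h => by rw [← hσρ y, ← hσρ y', h]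
    have hσeq : ∀ (g : G) (x : G → A),
        nuca (fun _ : G => c) (fun h => x (g * h)) = fun h => nuca (fun _ : G => c) x (g * h) := by
      intro g x
      funext h
      show c (fun m => x (g * (h * ↑m))) = c (fun m => x ((g * h) * ↑m))
      congr 1
      funext m
      congr 1
      group
    have hρeq : ∀ (g : G) (y : G → A),
        ρ (fun h => y (g * h)) = fun h => ρ y (g * h) := by
      intro g y
      apply hσinj
      rw [hσρ, hσeq g (ρ y), hσρ]
    obtain ⟨N₀, hN₀⟩ := exists_finite_window (fun y : G → A => ρ y 1)
      ((continuous_apply (1 : G)).comp hρcont)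
    set μ' : ((N₀ → A) → A) := fun pat =>
      ρ (fun h => if hh : h ∈ N₀ then pat ⟨h, hh⟩ else default) 1 with hμ'
    have ρ_eq : ρ = nuca (fun _ : G => μ') := by
      funext y g
      have h1 : μ' (fun m : N₀ => y (g * ↑m)) = ρ (fun h => y (g * h)) 1 := by
        rw [hμ']
        exact hN₀ _ _ (fun i hi => by simp [hi])
      have h2 : ρ (fun h => y (g * h)) 1 = ρ y g := by
        rw [hρeq g y]
        show ρ y (g * 1) = ρ y g
        rw [mul_one]
      show ρ y g = nuca (fun _ : G => μ') y g
      rw [show nuca (fun _ : G => μ') y g = μ' (fun m : N₀ => y (g * ↑m)) from rfl, h1, h2]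
    set E : Finset G := Ω₀.biUnion (fun ω => N₀.image (fun m => ω * m⁻¹)) with hE
    have hEmem : ∀ g ∈ E, ∃ ω ∈ Ω₀, ∃ m ∈ N₀, g = ω * m⁻¹ := by
      intro g hg
      rw [hE] at hg
      obtain ⟨ω, hω, hgm⟩ := Finset.mem_biUnion.mp hg
      obtain ⟨m, hm, rfl⟩ := Finset.mem_image.mp hgm
      exact ⟨ω, hω, m, hm, rfl⟩
    have hEoff : ∀ g, g ∉ E → ∀ m : G, m ∈ N₀ → s (g * m) = c := by
      intro g hg m hm
      by_contra hne
      apply hg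
      rw [hE]
      exact Finset.mem_biUnion.mpr ⟨g * m, hΩ₀in _ hne,
        Finset.mem_image.mpr ⟨m, hm, by group⟩⟩
    have keyρτ : ∀ (x : G → A) (g : G), g ∉ E → ρ (nuca s x) g = x g := by
      intro x g hg
      have h1 : (fun m : N₀ => nuca s x (g * ↑m)) = (fun m : N₀ => nuca (fun _ : G => c) x (g * ↑m)) := by
        funext m
        show s (g * ↑m) (fun m' => x ((g * ↑m) * ↑m')) = c (fun m' => x ((g * ↑m) * ↑m'))
        rw [hEoff g hg ↑m m.2]
      calc ρ (nuca s x) g = μ' (fun m : N₀ => nuca s x (g * ↑m)) := by rw [ρ_eq]; rfl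
        _ = μ' (fun m : N₀ => nuca (fun _ : G => c) x (g * ↑m)) := by rw [h1]
        _ = ρ (nuca (fun _ : G => c) x) g := by rw [ρ_eq]; rfl
        _ = x g := by rw [hρσ]
    have hτsurj : Function.Surjective (nuca s) := by
      intro y₀
      set y : G → A := ρ y₀ with hy
      set ext : (E → A) → (G → A) := fun u h => if hh : h ∈ E then u ⟨h, hh⟩ else y h with hext
      have hextoff : ∀ u h, h ∉ E → ext u h = y h := fun u h hh => by rw [hext]; exact dif_neg hh
      have hextin : ∀ u (h : G) (hh : h ∈ E), ext u h = u ⟨h, hh⟩ :=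
        fun u h hh => by rw [hext]; exact dif_pos hh
      set ψ : (E → A) → (E → A) := fun u g => ρ (nuca s (ext u)) ↑g with hψ
      have hψinj : Function.Injective ψ := by
        intro u u' huu'
        have hfull : ρ (nuca s (ext u)) = ρ (nuca s (ext u')) := by
          funext h
          by_cases hh : h ∈ E
          · have h3 := congrFun huu' ⟨h, hh⟩
            rw [hψ] at h3
            exact h3
          · rw [keyρτ _ _ hh, keyρτ _ _ hh, hextoff _ _ hh, hextoff _ _ hh]
        have hx : ext u = ext u' := hτinj (hρinj hfull)
        funext gE
        have h4 := congrFun hx ↑gE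
        rw [hextin u _ gE.2, hextin u' _ gE.2] at h4
        exact h4
      have hψsurj : Function.Surjective ψ := Finite.injective_iff_surjective.mp hψinj
      obtain ⟨u, hu⟩ := hψsurj (fun g : E => y ↑g)
      rw [hψ] at hu
      have h1 : ρ (nuca s (ext u)) = y := by
        funext h
        by_cases hh : h ∈ E
        · exact congrFun hu ⟨h, hh⟩
        · rw [keyρτ _ _ hh, hextoff _ _ hh]
      rw [hy] at h1
      exact ⟨ext u, hρinj h1⟩
    obtain ⟨τ', hτ'τ, hττ', hτ'cont⟩ : ∃ τ' : (G → A) → (G → A),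
        (∀ x, τ' (nuca s x) = x) ∧ (∀ y, nuca s (τ' y) = y) ∧ Continuous τ' := by
      have hbij : Function.Bijective (nuca s) := ⟨hτinj, hτsurj⟩
      exact ⟨⇑(Equiv.ofBijective _ hbij).symm,
        fun x => (Equiv.ofBijective _ hbij).symm_apply_apply x,
        fun y => (Equiv.ofBijective _ hbij).apply_symm_apply y,
        Homeomorph.continuous_symm
          ((nuca_continuous _).homeoOfEquivCompactToT2 (f := Equiv.ofBijective _ hbij))⟩
    have hτ'off : ∀ (y : G → A) (g : G), g ∉ E → τ' y g = ρ y g := by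
      intro y g hg
      have h := keyρτ (τ' y) g hg
      rw [hττ' y] at h
      exact h.symm
    have hwing : ∀ g : G, ∃ I : Finset G,
        ∀ y y' : G → A, (∀ i ∈ I, y i = y' i) → τ' y g = τ' y' g :=
      fun g => exists_finite_window (fun y => τ' y g) ((continuous_apply g).comp hτ'cont)
    choose I hI using hwing
    set N : Finset G := N₀ ∪ E.biUnion (fun g => (I g).image (fun i => g⁻¹ * i)) with hN
    have hN₀N : N₀ ⊆ N := by rw [hN]; exact Finset.subset_union_left
    have hτ'loc : ∀ (g : G) (y y' : G → A),
        (∀ m ∈ N, y (g * m) = y' (g * m)) → τ' y g = τ' y' g := by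
      intro g y y' hagree
      by_cases hg : g ∈ E
      · refine hI g y y' fun i hi => ?_
        have hmN : g⁻¹ * i ∈ N := by
          rw [hN]
          exact Finset.mem_union_right _
            (Finset.mem_biUnion.mpr ⟨g, hg, Finset.mem_image.mpr ⟨i, hi, rfl⟩⟩)
        have h5 := hagree _ hmN
        rwa [mul_inv_cancel_left] at h5
      · rw [hτ'off y g hg, hτ'off y' g hg, ρ_eq]
        show μ' (fun m : N₀ => y (g * ↑m)) = μ' (fun m : N₀ => y' (g * ↑m))
        exact congrArg μ' (funext fun m => hagree ↑m (hN₀N m.2))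
    set pad : (N → A) → G → A := fun pat k => if hk : k ∈ N then pat ⟨k, hk⟩ else default with hpad
    set t : G → ((N → A) → A) := fun g pat => τ' (fun h => pad pat (g⁻¹ * h)) g with htdef
    have ht_eq : nuca t = τ' := by
      funext y g
      show t g (fun m : N => y (g * ↑m)) = τ' y g
      rw [htdef]
      refine hτ'loc g _ y fun m hm => ?_
      show pad (fun m : N => y (g * ↑m)) (g⁻¹ * (g * m)) = y (g * m)
      rw [inv_mul_cancel_left, hpad]
      exact dif_pos hm
    set c'' : ((N → A) → A) := fun pat => μ' (fun m : N₀ => pat ⟨↑m, hN₀N m.2⟩) with hc''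
    have ht_off : ∀ g, g ∉ E → t g = c'' := by
      intro g hg
      funext pat
      rw [htdef, hc'']
      show τ' (fun h => pad pat (g⁻¹ * h)) g = μ' (fun m : N₀ => pat ⟨↑m, hN₀N m.2⟩)
      rw [hτ'off _ g hg, ρ_eq]
      show μ' (fun m : N₀ => pad pat (g⁻¹ * (g * ↑m))) = μ' (fun m : N₀ => pat ⟨↑m, hN₀N m.2⟩)
      have hfun : (fun m : N₀ => pad pat (g⁻¹ * (g * ↑m)))
          = (fun m : N₀ => pat ⟨↑m, hN₀N m.2⟩) := by
        funext m
        rw [inv_mul_cancel_left, hpad]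
        exact dif_pos (hN₀N m.2)
      rw [hfun]
    have hqρ : nuca (fun _ : G => c'') = ρ := by
      rw [ρ_eq]
      funext y g
      show c'' (fun m : N => y (g * ↑m)) = μ' (fun m : N₀ => y (g * ↑m))
      rw [hc'']
    have hst_id : nuca s ∘ nuca t = id := by
      funext y
      rw [Function.comp_apply, ht_eq, hττ', id_eq]
    have hts_id : nuca t ∘ nuca s = id := by
      funext x
      rw [Function.comp_apply, ht_eq, hτ'τ, id_eq]
    refine ⟨N, t, fun p hp => ?_⟩
    rcases orbitClosure_cases s c Ω₀ hs_off hp with ⟨g, rfl⟩ | rfl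
    · exact ⟨fun h => t (g⁻¹ * h),
        (mem_orbitClosure_iff t _).mpr fun F => ⟨g, fun h _ => rfl⟩,
        nuca_conj_comp s t hst_id g, nuca_conj_comp t s hts_id g⟩
    · refine ⟨fun _ => c'',
        const_mem_transfer s c t c'' Ω₀ N₀ E hΩ₀out hEmem ht_off hp, ?_, ?_⟩
      · funext y
        rw [Function.comp_apply, id_eq, hqρ, hσρ]
      · funext x
        rw [Function.comp_apply, id_eq, hqρ, hρσ]
  · -- FINITE CASE
    have hcc' := hcc
    rw [mem_orbitClosure_iff] at hcc'
    push_neg at hcc'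
    obtain ⟨F, hF⟩ := hcc'
    haveI : Fintype G := ⟨F.biUnion (fun h => Ω₀.image (fun ω => h * ω⁻¹)), by
      intro g
      obtain ⟨h, hh, hne⟩ := hF g
      refine Finset.mem_biUnion.mpr ⟨h, hh, Finset.mem_image.mpr ⟨g⁻¹ * h, ?_, by group⟩⟩
      exact hΩ₀in _ (fun he => hne he.symm)⟩
    have hτbij : Function.Bijective (nuca s) := Finite.injective_iff_bijective.mp hτinj
    obtain ⟨τ', hτ'τ, hττ'⟩ : ∃ τ' : (G → A) → (G → A),
        (∀ x, τ' (nuca s x) = x) ∧ (∀ y, nuca s (τ' y) = y) :=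
      ⟨⇑(Equiv.ofBijective _ hτbij).symm,
        fun x => (Equiv.ofBijective _ hτbij).symm_apply_apply x,
        fun y => (Equiv.ofBijective _ hτbij).apply_symm_apply y⟩
    set Nu : Finset G := Finset.univ with hNu
    set t : G → ((Nu → A) → A) :=
      fun g pat => τ' (fun h => pat ⟨g⁻¹ * h, hNu ▸ Finset.mem_univ (g⁻¹ * h)⟩) g with htdef
    have ht_eq : nuca t = τ' := by
      funext y g
      show t g (fun m : Nu => y (g * ↑m)) = τ' y g
      rw [htdef]
      show τ' (fun h => y (g * (g⁻¹ * h))) g = τ' y g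
      have h6 : (fun h => y (g * (g⁻¹ * h))) = y := funext fun h => by rw [mul_inv_cancel_left]
      rw [h6]
    have hst_id : nuca s ∘ nuca t = id := by
      funext y
      rw [Function.comp_apply, ht_eq, hττ', id_eq]
    have hts_id : nuca t ∘ nuca s = id := by
      funext x
      rw [Function.comp_apply, ht_eq, hτ'τ, id_eq]
    refine ⟨Nu, t, fun p hp => ?_⟩
    rcases orbitClosure_cases s c Ω₀ hs_off hp with ⟨g, rfl⟩ | rfl
    · exact ⟨fun h => t (g⁻¹ * h),
        (mem_orbitClosure_iff t _).mpr fun F' => ⟨g, fun h _ => rfl⟩,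
        nuca_conj_comp s t hst_id g, nuca_conj_comp t s hts_id g⟩
    · exact absurd hp hcc
end

section
/- Let A be an alphabet and G a group. Let M ⊆ G be a finite subset and S = A^(A^M). Suppose that σ_t ∘ σ_s = Id on A^G for some s, t ∈ S^G, and that s has uniformly bounded singularity. Then for each finite subset E ⊆ G there exist asymptotically constant configurations p, q ∈ S^G such that p|_E = s|_E, q|_E = t|_E, and σ_q ∘ σ_p = Id on A^G. -/
open Function Set Pointwise

/-- if `σ_t ∘ σ_s = Id` and `s` has uniformly bounded singularity,
then for every finite `E ⊆ G` there are asymptotically constant `p, q` agreeing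
with `s, t` on `E` such that `σ_q ∘ σ_p = Id`. -/
theorem local_approximation_of_left_inverse {G A : Type*} [Group G]
    {M : Finset G} (s t : G → ((M → A) → A))
    (hst : nuca t ∘ nuca s = id)
    (hubs : UniformlyBoundedSingularity s) (E : Finset G) :
    ∃ p q : G → ((M → A) → A),
      AsymptoticallyConstant p ∧ AsymptoticallyConstant q ∧
      (∀ g ∈ E, p g = s g) ∧ (∀ g ∈ E, q g = t g) ∧
      nuca q ∘ nuca p = id := by
  classical
  have hid : ∀ (x : G → A) (g : G),
      t g (fun n : M => s (g * n) (fun m : M => x (g * n * m))) = x g := by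
    intro x g
    have h := congrFun (congrFun hst x) g
    simpa [nuca, Function.comp] using h
  by_cases hA : ∀ a b : A, a = b
  · refine ⟨fun g => if g ∈ E then s g else s 1,
      fun g => if g ∈ E then t g else t 1,
      ⟨s 1, E, fun g hg => by simp [hg]⟩,
      ⟨t 1, E, fun g hg => by simp [hg]⟩,
      fun g hg => by simp [hg], fun g hg => by simp [hg], ?_⟩
    funext x g
    exact hA _ _
  push_neg at hA
  obtain ⟨a, b, hab⟩ := hA
  have hMM : ∃ n m : M, (n : G) * (m : G) = 1 := by
    by_contra hcon
    push_neg at hcon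
    have h1 : t 1 (fun n : M => s (n : G) (fun _ : M => a)) = a := by
      simpa using hid (fun _ => a) 1
    have h2 : t 1 (fun n : M => s (n : G)
        (fun m : M => if (n : G) * (m : G) = 1 then b else a)) = b := by
      simpa using hid (fun g => if g = 1 then b else a) 1
    have he : (fun n : M => s (n : G)
        (fun m : M => if (n : G) * (m : G) = 1 then b else a))
        = (fun n : M => s (n : G) (fun _ : M => a)) := by
      funext n
      congr 1
      funext m
      rw [if_neg (hcon n m)]
    rw [he] at h2
    exact hab (h1.symm.trans h2)
  obtain ⟨n₀, m₀, hnm⟩ := hMM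
  haveI := Classical.decEq G
  set E₁ : Finset G := ((E ∪ E⁻¹) ∪ (M ∪ M⁻¹)) ∪ {1} with hE₁def
  have h1E₁ : (1 : G) ∈ E₁ := by simp [hE₁def]
  have hEE₁ : ∀ g ∈ E, g ∈ E₁ := by intro g hg; simp [hE₁def, hg]
  have hME₁ : ∀ g ∈ M, g ∈ E₁ := by intro g hg; simp [hE₁def, hg]
  have hMiE₁ : ∀ g ∈ M, g⁻¹ ∈ E₁ := by
    intro g hg
    have : g⁻¹ ∈ M⁻¹ := Finset.inv_mem_inv hg
    simp [hE₁def, this]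
  have hE₁symm : ∀ g ∈ E₁, g⁻¹ ∈ E₁ := by
    intro g hg
    simp only [hE₁def, Finset.mem_union, Finset.mem_singleton, Finset.mem_inv] at hg ⊢
    rcases hg with (((h | h) | (h | h)) | h)
    · exact Or.inl (Or.inl (Or.inr ⟨g, h, rfl⟩))
    · obtain ⟨y, hy, rfl⟩ := h
      exact Or.inl (Or.inl (Or.inl (by simpa using hy)))
    · exact Or.inl (Or.inr (Or.inr ⟨g, h, rfl⟩))
    · obtain ⟨y, hy, rfl⟩ := h
      exact Or.inl (Or.inr (Or.inl (by simpa using hy)))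
    · subst h; exact Or.inr (by simp)
  set E₂ : Finset G := E₁ * E₁ * E₁ with hE₂def
  have h1E₂ : (1 : G) ∈ E₂ := by
    have := Finset.mul_mem_mul (Finset.mul_mem_mul h1E₁ h1E₁) h1E₁
    simpa using this
  have hE₁E₂ : ∀ g ∈ E₁, g ∈ E₂ := by
    intro g hg
    have := Finset.mul_mem_mul (Finset.mul_mem_mul hg h1E₁) h1E₁
    simpa using this
  have hE₂mem : ∀ x ∈ E₁, ∀ y ∈ E₁, ∀ z ∈ E₁, x * y * z ∈ E₂ :=
    fun x hx y hy z hz => Finset.mul_mem_mul (Finset.mul_mem_mul hx hy) hz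
  have hE₂symm : ∀ g ∈ E₂, g⁻¹ ∈ E₂ := by
    intro g hg
    obtain ⟨u, hu, z, hz, rfl⟩ := Finset.mem_mul.mp hg
    obtain ⟨x, hx, y, hy, rfl⟩ := Finset.mem_mul.mp hu
    have : (x * y * z)⁻¹ = z⁻¹ * y⁻¹ * x⁻¹ := by group
    rw [this]
    exact hE₂mem _ (hE₁symm z hz) _ (hE₁symm y hy) _ (hE₁symm x hx)
  obtain ⟨F, hE₂F, c, hc⟩ := hubs E₂ h1E₂ hE₂symm
  have hEF : ∀ g ∈ E, g ∈ F := fun g hg => hE₂F (hE₁E₂ g (hEE₁ g hg))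
  by_cases hdeep : ∃ g₀ : G, ∀ n : M,
      g₀ * (n : G) ∈ (F : Set G) * (E₂ : Set G) ∧ g₀ * (n : G) ∉ F
  · -- deep point case
    obtain ⟨g₀, hg₀⟩ := hdeep
    refine ⟨fun g => if g ∈ F then s g else c,
        fun g => if g ∈ F ∪ F * M⁻¹ then t g else t g₀,
        ⟨c, F, fun g hg => by simp [hg]⟩,
        ⟨t g₀, F ∪ F * M⁻¹, fun g hg => by simp [hg]⟩,
        fun g hg => by simp [hEF g hg],
        fun g hg => by simp [Finset.mem_union_left _ (hEF g hg)], ?_⟩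
    funext x g
    show (if g ∈ F ∪ F * M⁻¹ then t g else t g₀)
        (fun n : M => (if g * (n : G) ∈ F then s (g * n) else c)
          (fun m : M => x (g * n * m))) = x g
    by_cases hgFp : g ∈ F ∪ F * M⁻¹
    · rw [if_pos hgFp]
      have hpn : ∀ n : M, (if g * (n : G) ∈ F then s (g * n) else c) = s (g * (n : G)) := by
        intro n
        have hmem : g * (n : G) ∈ (F : Set G) * (E₂ : Set G) := by
          rcases Finset.mem_union.mp hgFp with h | h
          · exact Set.mul_mem_mul (Finset.mem_coe.mpr h)
              (Finset.mem_coe.mpr (hE₁E₂ _ (hME₁ _ n.2)))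
          · obtain ⟨f, hf, ν, hν, hfν⟩ := Finset.mem_mul.mp h
            obtain ⟨μ, hμ, hμν⟩ := Finset.mem_inv.mp hν
            have hgn : g * (n : G) = f * (μ⁻¹ * n * 1) := by
              rw [← hfν, ← hμν]; group
            rw [hgn]
            exact Set.mul_mem_mul (Finset.mem_coe.mpr hf)
              (Finset.mem_coe.mpr (hE₂mem _ (hMiE₁ _ hμ) _ (hME₁ _ n.2) _ h1E₁))
        by_cases hF : g * (n : G) ∈ F
        · rw [if_pos hF]
        · rw [if_neg hF]
          exact (hc _ ⟨hmem, by simpa using hF⟩).symm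
      have he : (fun n : M => (if g * (n : G) ∈ F then s (g * n) else c)
            (fun m : M => x (g * n * m)))
          = (fun n : M => s (g * (n : G)) (fun m : M => x (g * n * m))) := by
        funext n; rw [hpn n]
      rw [he]
      exact hid x g
    · rw [if_neg hgFp]
      have hgn : ∀ n : M, g * (n : G) ∉ F := by
        intro n hF
        exact hgFp (Finset.mem_union_right _ (Finset.mem_mul.mpr
          ⟨g * n, hF, (n : G)⁻¹, Finset.inv_mem_inv n.2, by group⟩))
      have he : (fun n : M => (if g * (n : G) ∈ F then s (g * n) else c)
            (fun m : M => x (g * n * m)))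
          = (fun n : M => c (fun m : M => x (g * n * m))) := by
        funext n; rw [if_neg (hgn n)]
      rw [he]
      have hsc : ∀ n : M, s (g₀ * (n : G)) = c :=
        fun n => hc _ ⟨(hg₀ n).1, by simpa using (hg₀ n).2⟩
      calc t g₀ (fun n : M => c (fun m : M => x (g * n * m)))
          = t g₀ (fun n : M => s (g₀ * (n : G))
              (fun m : M => (fun h => x (g * (g₀⁻¹ * h))) (g₀ * n * m))) := by
            congr 1
            funext n
            rw [hsc n]
            congr 1
            funext m
            show x (g * (n : G) * (m : G)) = x (g * (g₀⁻¹ * (g₀ * n * m)))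
            congr 1
            group
        _ = (fun h => x (g * (g₀⁻¹ * h))) g₀ := hid (fun h => x (g * (g₀⁻¹ * h))) g₀
        _ = x g := by
            show x (g * (g₀⁻¹ * g₀)) = x g
            congr 1
            group
  · -- degenerate case
    push_neg at hdeep
    set B : Finset G := F * M⁻¹ with hBdef
    have hmemB : ∀ g : G, g ∈ B ↔ ∃ μ : M, g * (μ : G) ∈ F := by
      intro g
      constructor
      · intro h
        obtain ⟨f, hf, ν, hν, hfν⟩ := Finset.mem_mul.mp h
        obtain ⟨μ, hμ, hμν⟩ := Finset.mem_inv.mp hν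
        refine ⟨⟨μ, hμ⟩, ?_⟩
        have : g * μ = f := by rw [← hfν, ← hμν]; group
        rw [this]; exact hf
      · rintro ⟨μ, hF⟩
        exact Finset.mem_mul.mpr ⟨g * μ, hF, (μ : G)⁻¹, Finset.inv_mem_inv μ.2, by group⟩
    have hFB : ∀ g ∈ F, g ∈ B := by
      intro g hg
      obtain ⟨k, hk⟩ := hdeep g
      refine (hmemB g).mpr ⟨k, hk ?_⟩
      exact Set.mul_mem_mul (Finset.mem_coe.mpr hg)
        (Finset.mem_coe.mpr (hE₁E₂ _ (hME₁ _ k.2)))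
    have hstep : ∀ g ∈ B, ∀ n : M, g * (n : G) ∈ B := by
      intro g hg n
      obtain ⟨μ, hgμ⟩ := (hmemB g).mp hg
      obtain ⟨k, hk⟩ := hdeep (g * n)
      refine (hmemB _).mpr ⟨k, hk ?_⟩
      have : g * (n : G) * (k : G) = (g * μ) * ((μ : G)⁻¹ * n * k) := by group
      rw [this]
      exact Set.mul_mem_mul (Finset.mem_coe.mpr hgμ)
        (Finset.mem_coe.mpr (hE₂mem _ (hMiE₁ _ μ.2) _ (hME₁ _ n.2) _ (hME₁ _ k.2)))
    have himg : ∀ n : M, Finset.image (· * (n : G)) B = B := by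
      intro n
      apply Finset.eq_of_subset_of_card_le
      · intro x hx
        obtain ⟨b, hb, rfl⟩ := Finset.mem_image.mp hx
        exact hstep b hb n
      · exact le_of_eq (Finset.card_image_of_injective _ (mul_left_injective (n : G))).symm
    have hsat : ∀ (g : G) (n : M), g * (n : G) ∈ B → g ∈ B := by
      intro g n h
      rw [← himg n] at h
      obtain ⟨b, hb, hbe⟩ := Finset.mem_image.mp h
      have : b = g := mul_left_injective (n : G) hbe
      exact this ▸ hb
    refine ⟨fun g => if g ∈ B then s g else (fun u : M → A => u m₀),
        fun g => if g ∈ B then t g else (fun u : M → A => u n₀),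
        ⟨fun u : M → A => u m₀, B, fun g hg => by simp [hg]⟩,
        ⟨fun u : M → A => u n₀, B, fun g hg => by simp [hg]⟩,
        fun g hg => by simp [hFB g (hEF g hg)],
        fun g hg => by simp [hFB g (hEF g hg)], ?_⟩
    funext x g
    show (if g ∈ B then t g else fun u : M → A => u n₀)
        (fun n : M => (if g * (n : G) ∈ B then s (g * n) else fun u : M → A => u m₀)
          (fun m : M => x (g * n * m))) = x g
    by_cases hgB : g ∈ B
    · rw [if_pos hgB]
      have he : (fun n : M => (if g * (n : G) ∈ B then s (g * n) else fun u : M → A => u m₀)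
            (fun m : M => x (g * n * m)))
          = (fun n : M => s (g * (n : G)) (fun m : M => x (g * n * m))) := by
        funext n; rw [if_pos (hstep g hgB n)]
      rw [he]
      exact hid x g
    · rw [if_neg hgB]
      have he : (fun n : M => (if g * (n : G) ∈ B then s (g * n) else fun u : M → A => u m₀)
            (fun m : M => x (g * n * m)))
          = (fun n : M => x (g * n * m₀)) := by
        funext n
        rw [if_neg (fun h => hgB (hsat g n h))]
      rw [he]
      show x (g * (n₀ : G) * (m₀ : G)) = x g
      rw [mul_assoc, hnm, mul_one]
end
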